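/- Let X = {xₘ} ⊂ (−1,1) and suppose for every choice of signs sₘ ∈ {−1, +1} there exists a real algebraic polynomial P of degree ≤ N with P(xₘ) = sₘ for all m and |P(x)| < 1 for x ∈ [−1,1] \ X. Then any real measure f = Σₘ cₘ δ_{xₘ} (cₘ ∈ ℝ) is the unique real Borel measure g on [−1,1] of minimal TV norm satisfying ∫ x^k dg = ∫ x^k df for 0 ≤ k ≤ N. -/

import Mathlib

open MeasureTheory

/-- The total variation norm of a real (signed) Borel measure, as the supremum of
`∑ |v B|` over finite families of pairwise disjoint measurable sets. -/
noncomputable def sTVNorm {α : Type*} [MeasurableSpace α] (v : VectorMeasure α ℝ) : ℝ :=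
  sSup {r : ℝ | ∃ P : Finset (Set α), (∀ B ∈ P, MeasurableSet B) ∧
    ((P : Set (Set α)).PairwiseDisjoint id) ∧ r = ∑ B ∈ P, |v B|}

/-- Integral of `g` against a signed measure, via the Jordan decomposition. -/
noncomputable def sInt {α : Type*} [MeasurableSpace α] (μ : SignedMeasure α) (g : α → ℝ) : ℝ :=
  (∫ a, g a ∂μ.toJordanDecomposition.posPart) - ∫ a, g a ∂μ.toJordanDecomposition.negPart

variable {α : Type*} [MeasurableSpace α]

lemma sm_apply (v : SignedMeasure α) {B : Set α} (hB : MeasurableSet B) :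
    v B = (v.toJordanDecomposition.posPart B).toReal
        - (v.toJordanDecomposition.negPart B).toReal := by
  conv_lhs => rw [← v.toSignedMeasure_toJordanDecomposition]
  rw [JordanDecomposition.toSignedMeasure, Measure.toSignedMeasure_sub_apply hB]; rfl

lemma sTVNorm_bound (v : SignedMeasure α) {r : ℝ}
    (hr : r ∈ {r : ℝ | ∃ P : Finset (Set α), (∀ B ∈ P, MeasurableSet B) ∧
      ((P : Set (Set α)).PairwiseDisjoint id) ∧ r = ∑ B ∈ P, |v B|}) :
    r ≤ (v.toJordanDecomposition.posPart Set.univ).toReal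
      + (v.toJordanDecomposition.negPart Set.univ).toReal := by
  obtain ⟨P, hPm, hPd, rfl⟩ := hr
  set pos := v.toJordanDecomposition.posPart
  set neg := v.toJordanDecomposition.negPart
  have h1 : ∀ B ∈ P, |v B| ≤ (pos B).toReal + (neg B).toReal := by
    intro B hB
    rw [sm_apply v (hPm B hB)]
    exact (abs_sub _ _).trans (by
      rw [abs_of_nonneg ENNReal.toReal_nonneg, abs_of_nonneg ENNReal.toReal_nonneg])
  refine (Finset.sum_le_sum h1).trans ?_
  rw [Finset.sum_add_distrib]
  have key : ∀ μ : Measure α, IsFiniteMeasure μ →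
      ∑ B ∈ P, (μ B).toReal ≤ (μ Set.univ).toReal := by
    intro μ hμ
    rw [← ENNReal.toReal_sum (fun B _ => measure_ne_top μ B)]
    refine ENNReal.toReal_mono (measure_ne_top μ _) ?_
    have hbu := measure_biUnion_finset (μ := μ) hPd (fun B hB => hPm B hB)
    simp only [id] at hbu
    rw [← hbu]
    exact measure_mono (Set.subset_univ _)
  exact add_le_add (key pos inferInstance) (key neg inferInstance)

lemma sTVNorm_eq [Nonempty α] (v : SignedMeasure α) :
    sTVNorm v = (v.toJordanDecomposition.posPart Set.univ).toReal
      + (v.toJordanDecomposition.negPart Set.univ).toReal := by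
  classical
  set pos := v.toJordanDecomposition.posPart
  set neg := v.toJordanDecomposition.negPart
  obtain ⟨S, hSm, hS1, hS2⟩ := v.toJordanDecomposition.mutuallySingular
  have hSne : S ≠ Sᶜ := by
    intro h
    obtain ⟨a⟩ := ‹Nonempty α›
    by_cases ha : a ∈ S
    · exact (h ▸ ha : a ∈ Sᶜ) ha
    · exact ha (h.symm ▸ (ha : a ∈ Sᶜ))
  have hnegS : neg S = neg Set.univ := by
    have := measure_union (μ := neg) (disjoint_compl_right (a := S)) hSm.compl
    rw [Set.union_compl_self, hS2, add_zero] at this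
    exact this.symm
  have hposS : pos Sᶜ = pos Set.univ := by
    have := measure_union (μ := pos) (disjoint_compl_right (a := S)) hSm.compl
    rw [Set.union_compl_self, hS1, zero_add] at this
    exact this.symm
  have hmem : (pos Set.univ).toReal + (neg Set.univ).toReal ∈
      {r : ℝ | ∃ P : Finset (Set α), (∀ B ∈ P, MeasurableSet B) ∧
        ((P : Set (Set α)).PairwiseDisjoint id) ∧ r = ∑ B ∈ P, |v B|} := by
    refine ⟨{S, Sᶜ}, ?_, ?_, ?_⟩
    · intro B hB
      rcases Finset.mem_insert.1 hB with h | h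
      · exact h ▸ hSm
      · rw [Finset.mem_singleton.1 h]; exact hSm.compl
    · intro B hB C hC hBC
      simp only [Finset.coe_insert, Finset.coe_singleton, Set.mem_insert_iff,
        Set.mem_singleton_iff] at hB hC
      rcases hB with rfl | rfl <;> rcases hC with rfl | rfl <;>
        first
          | exact absurd rfl hBC
          | simpa [Function.onFun] using disjoint_compl_right
          | simpa [Function.onFun] using disjoint_compl_left
    · rw [Finset.sum_pair hSne, sm_apply v hSm, sm_apply v hSm.compl, hS1, hS2, hnegS, hposS]
      simp [abs_of_nonneg ENNReal.toReal_nonneg, abs_of_nonpos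
        (neg_nonpos_of_nonneg ENNReal.toReal_nonneg)]
      ring
  refine le_antisymm ?_ ?_
  · exact csSup_le ⟨_, hmem⟩ (fun r hr => sTVNorm_bound v hr)
  · exact le_csSup ⟨_, fun r hr => sTVNorm_bound v hr⟩ hmem

section II
abbrev II := Set.Icc (-1 : ℝ) 1

lemma cont_integrable {h : II → ℝ} (hc : Continuous h) (μ : Measure II) [IsFiniteMeasure μ] :
    Integrable h μ :=
  hc.integrable_of_hasCompactSupport ((isClosed_tsupport h).isCompact)

lemma sInt_eq (v : SignedMeasure II) (a b : Measure II) [IsFiniteMeasure a] [IsFiniteMeasure b]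
    (hv : v = a.toSignedMeasure - b.toSignedMeasure)
    (h : II → ℝ) (hc : Continuous h) :
    sInt v h = (∫ y, h y ∂a) - ∫ y, h y ∂b := by
  set pos := v.toJordanDecomposition.posPart with hpos
  set neg := v.toJordanDecomposition.negPart with hneg
  have hme : pos + b = a + neg := by
    ext B hB
    have h1 : v B = (a B).toReal - (b B).toReal := by
      rw [hv, Measure.toSignedMeasure_sub_apply hB]; rfl
    have h2 : v B = (pos B).toReal - (neg B).toReal := sm_apply v hB
    have h3 : (pos B + b B).toReal = (a B + neg B).toReal := by
      rw [ENNReal.toReal_add (measure_ne_top _ _) (measure_ne_top _ _),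
        ENNReal.toReal_add (measure_ne_top _ _) (measure_ne_top _ _)]
      linarith
    have h4 := (ENNReal.toReal_eq_toReal_iff' (by finiteness) (by finiteness)).1 h3
    simpa [Measure.add_apply] using h4
  have hint : ∫ y, h y ∂pos + ∫ y, h y ∂b = ∫ y, h y ∂a + ∫ y, h y ∂neg := by
    rw [← integral_add_measure (cont_integrable hc pos) (cont_integrable hc b),
      ← integral_add_measure (cont_integrable hc a) (cont_integrable hc neg), hme]
  unfold sInt
  rw [← hpos, ← hneg]
  linarith

lemma sInt_eval (v : SignedMeasure II) {N : ℕ} (P : Polynomial ℝ) (hP : P.natDegree ≤ N) :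
    sInt v (fun a => P.eval (a : ℝ)) =
      ∑ k ∈ Finset.range (N + 1), P.coeff k * sInt v (fun a => (a : ℝ) ^ k) := by
  have hev : ∀ y : ℝ, P.eval y = ∑ k ∈ Finset.range (N + 1), P.coeff k * y ^ k := fun y =>
    Polynomial.eval_eq_sum_range' (Nat.lt_succ_of_le hP) y
  have key : ∀ (μ : Measure II) [IsFiniteMeasure μ],
      ∫ a, P.eval (a : ℝ) ∂μ =
        ∑ k ∈ Finset.range (N + 1), P.coeff k * ∫ a, (a : ℝ) ^ k ∂μ := by
    intro μ _
    simp_rw [hev]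
    rw [integral_finset_sum (f := fun k (a : II) => P.coeff k * (a : ℝ) ^ k) _ (fun k _ =>
      (cont_integrable (continuous_const.mul (continuous_subtype_val.pow k)) μ))]
    exact Finset.sum_congr rfl fun k _ => integral_const_mul _ _
  unfold sInt
  rw [key, key, ← Finset.sum_sub_distrib]
  exact Finset.sum_congr rfl fun k _ => (mul_sub _ _ _).symm

end II

section supported
open scoped Classical
variable {M : ℕ} {x : Fin M → II} (hx : Function.Injective x)
include hx

lemma measure_supported (μ : Measure II) (hnull : μ (Set.range x)ᶜ = 0)
    {B : Set II} (hB : MeasurableSet B) :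
    μ B = ∑ m, if x m ∈ B then μ {x m} else 0 := by
  classical
  have hXm : MeasurableSet (Set.range x) := (Set.finite_range x).measurableSet
  have h1 : μ B = μ (B ∩ Set.range x) := by
    have := measure_inter_add_diff (μ := μ) B hXm
    have h2 : μ (B \ Set.range x) = 0 :=
      measure_mono_null (fun y hy => hy.2) hnull
    rw [h2, add_zero] at this
    exact this.symm
  have h2 : B ∩ Set.range x = ⋃ m ∈ (Finset.univ : Finset (Fin M)), ({x m} ∩ B) := by
    ext y
    simp only [Set.mem_inter_iff, Set.mem_range, Set.mem_iUnion, Set.mem_singleton_iff,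
      Finset.mem_univ, exists_prop, true_and]
    constructor
    · rintro ⟨hyB, m, rfl⟩; exact ⟨m, rfl, hyB⟩
    · rintro ⟨m, rfl, hyB⟩; exact ⟨hyB, m, rfl⟩
  have hdisj : (↑(Finset.univ : Finset (Fin M)) : Set (Fin M)).PairwiseDisjoint
      (fun m => ({x m} : Set II) ∩ B) := by
    intro m _ n _ hmn
    have : x m ≠ x n := fun h => hmn (hx h)
    simp only [Function.onFun]
    exact Set.disjoint_left.2 (by
      rintro y ⟨rfl, -⟩ ⟨h', -⟩
      exact this (by rw [h']))
  rw [h1, h2, measure_biUnion_finset hdisj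
    (fun m _ => (measurableSet_singleton _).inter hB)]
  refine Finset.sum_congr rfl fun m _ => ?_
  by_cases hmB : x m ∈ B
  · rw [if_pos hmB, Set.inter_eq_self_of_subset_left (Set.singleton_subset_iff.2 hmB)]
  · rw [if_neg hmB, Set.singleton_inter_eq_empty.2 hmB, measure_empty]

lemma measure_supported_eq_sum (μ : Measure II) [IsFiniteMeasure μ]
    (hnull : μ (Set.range x)ᶜ = 0) :
    μ = ∑ m, μ {x m} • Measure.dirac (x m) := by
  classical
  ext B hB
  rw [measure_supported hx μ hnull hB, Measure.finset_sum_apply]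
  refine Finset.sum_congr rfl fun m _ => ?_
  rw [Measure.smul_apply, Measure.dirac_apply' _ hB, smul_eq_mul]
  by_cases hmB : x m ∈ B
  · simp [hmB]
  · simp [hmB]

lemma integral_supported (μ : Measure II) [IsFiniteMeasure μ]
    (hnull : μ (Set.range x)ᶜ = 0) {h : II → ℝ} (hc : Continuous h) :
    ∫ y, h y ∂μ = ∑ m, (μ {x m}).toReal * h (x m) := by
  have heq := @measure_supported_eq_sum M x hx μ _ hnull
  have hfin : ∀ m : Fin M, IsFiniteMeasure (μ {x m} • Measure.dirac (x m)) := by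
    intro m
    refine ⟨?_⟩
    rw [Measure.smul_apply, smul_eq_mul]
    exact ENNReal.mul_lt_top (measure_lt_top μ _) (by simp)
  have hint : ∀ m ∈ (Finset.univ : Finset (Fin M)),
      Integrable h (μ {x m} • Measure.dirac (x m)) := fun m _ =>
    @cont_integrable h hc (μ {x m} • Measure.dirac (x m)) (hfin m)
  calc ∫ y, h y ∂μ = ∫ y, h y ∂(∑ m, μ {x m} • Measure.dirac (x m)) := by
        rw [← heq]
    _ = ∑ m, ∫ y, h y ∂(μ {x m} • Measure.dirac (x m)) := integral_finset_sum_measure hint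
    _ = ∑ m, (μ {x m}).toReal * h (x m) := Finset.sum_congr rfl fun m _ => by
        rw [integral_smul_measure, integral_dirac, smul_eq_mul]

end supported

lemma vm_sum_apply {α : Type*} [MeasurableSpace α] {ι : Type*} (s : Finset ι)
    (w : ι → VectorMeasure α ℝ) (B : Set α) :
    (∑ i ∈ s, w i) B = ∑ i ∈ s, w i B := by
  classical
  induction s using Finset.induction_on with
  | empty => simp
  | insert _ _ hns ih =>
    rw [Finset.sum_insert hns, Finset.sum_insert hns, VectorMeasure.add_apply, ih]

lemma max_sub_max (r : ℝ) : max r 0 - max (-r) 0 = r := by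
  rcases le_total 0 r with h | h
  · rw [max_eq_left h, max_eq_right (neg_nonpos.2 h), sub_zero]
  · rw [max_eq_right h, max_eq_left (neg_nonneg.2 h), zero_sub, neg_neg]

lemma toReal_ofReal_max (r : ℝ) : (ENNReal.ofReal r).toReal = max r 0 := by
  rcases le_total 0 r with h | h
  · rw [ENNReal.toReal_ofReal h, max_eq_left h]
  · rw [ENNReal.ofReal_of_nonpos h, max_eq_right h]
    simp

section fpart
open scoped Classical
variable {M : ℕ} {x : Fin M → II}

lemma isFinite_sum_smul_dirac (w : Fin M → ENNReal) (hw : ∀ m, w m ≠ ⊤) :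
    IsFiniteMeasure (∑ m, w m • Measure.dirac (x m)) := by
  refine ⟨?_⟩
  rw [Measure.finset_sum_apply]
  refine ENNReal.sum_lt_top.2 fun m _ => ?_
  rw [Measure.smul_apply, smul_eq_mul]
  exact ENNReal.mul_lt_top (hw m).lt_top (by simp)

lemma integral_sum_smul_dirac (w : Fin M → ENNReal) (hw : ∀ m, w m ≠ ⊤)
    {h : II → ℝ} (hc : Continuous h) :
    ∫ y, h y ∂(∑ m, w m • Measure.dirac (x m)) = ∑ m, (w m).toReal * h (x m) := by
  have hfin : ∀ m : Fin M, IsFiniteMeasure (w m • Measure.dirac (x m)) := by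
    intro m
    refine ⟨?_⟩
    rw [Measure.smul_apply, smul_eq_mul]
    exact ENNReal.mul_lt_top (hw m).lt_top (by simp)
  have hint : ∀ m ∈ (Finset.univ : Finset (Fin M)),
      Integrable h (w m • Measure.dirac (x m)) := fun m _ =>
    @cont_integrable h hc (w m • Measure.dirac (x m)) (hfin m)
  rw [integral_finset_sum_measure hint]
  refine Finset.sum_congr rfl fun m _ => ?_
  rw [integral_smul_measure, integral_dirac, smul_eq_mul]

lemma f_apply (c : Fin M → ℝ) {B : Set II} (hB : MeasurableSet B) :
    (∑ m, c m • (Measure.dirac (x m)).toSignedMeasure : SignedMeasure II) B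
      = ∑ m, if x m ∈ B then c m else 0 := by
  rw [vm_sum_apply]
  refine Finset.sum_congr rfl fun m _ => ?_
  rw [VectorMeasure.smul_apply, Measure.toSignedMeasure_apply_measurable hB, measureReal_def,
    Measure.dirac_apply' _ hB]
  by_cases hmB : x m ∈ B <;> simp [hmB]

lemma f_decomp (c : Fin M → ℝ) :
    (∑ m, c m • (Measure.dirac (x m)).toSignedMeasure : SignedMeasure II)
      = @Measure.toSignedMeasure II _ (∑ m, ENNReal.ofReal (c m) • Measure.dirac (x m))
          (isFinite_sum_smul_dirac _ (fun m => ENNReal.ofReal_ne_top))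
      - @Measure.toSignedMeasure II _ (∑ m, ENNReal.ofReal (-c m) • Measure.dirac (x m))
          (isFinite_sum_smul_dirac _ (fun m => ENNReal.ofReal_ne_top)) := by
  haveI h1 := isFinite_sum_smul_dirac (x := x)
    (fun m => ENNReal.ofReal (c m)) (fun m => ENNReal.ofReal_ne_top)
  haveI h2 := isFinite_sum_smul_dirac (x := x)
    (fun m => ENNReal.ofReal (-c m)) (fun m => ENNReal.ofReal_ne_top)
  ext B hB
  rw [VectorMeasure.sub_apply, Measure.toSignedMeasure_apply_measurable hB,
    Measure.toSignedMeasure_apply_measurable hB, f_apply c hB, measureReal_def, measureReal_def,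
    Measure.finset_sum_apply, Measure.finset_sum_apply,
    ENNReal.toReal_sum (fun m _ => by
      rw [Measure.smul_apply, smul_eq_mul, Measure.dirac_apply' _ hB]
      exact ENNReal.mul_ne_top ENNReal.ofReal_ne_top
        (by by_cases hxB : x m ∈ B <;> simp [hxB])),
    ENNReal.toReal_sum (fun m _ => by
      rw [Measure.smul_apply, smul_eq_mul, Measure.dirac_apply' _ hB]
      exact ENNReal.mul_ne_top ENNReal.ofReal_ne_top
        (by by_cases hxB : x m ∈ B <;> simp [hxB])),
    ← Finset.sum_sub_distrib]
  refine Finset.sum_congr rfl fun m _ => ?_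
  rw [Measure.smul_apply, Measure.smul_apply, Measure.dirac_apply' _ hB]
  by_cases hmB : x m ∈ B
  · simp only [hmB, Set.indicator_of_mem, Pi.one_apply, smul_eq_mul, mul_one, if_pos,
      toReal_ofReal_max]
    exact (max_sub_max (c m)).symm
  · simp [hmB]

lemma sInt_f (c : Fin M → ℝ) {h : II → ℝ} (hc : Continuous h) :
    sInt (∑ m, c m • (Measure.dirac (x m)).toSignedMeasure) h = ∑ m, c m * h (x m) := by
  haveI h1 := isFinite_sum_smul_dirac (x := x)
    (fun m => ENNReal.ofReal (c m)) (fun m => ENNReal.ofReal_ne_top)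
  haveI h2 := isFinite_sum_smul_dirac (x := x)
    (fun m => ENNReal.ofReal (-c m)) (fun m => ENNReal.ofReal_ne_top)
  rw [sInt_eq _ _ _ (f_decomp c) h hc,
    integral_sum_smul_dirac _ (fun m => ENNReal.ofReal_ne_top) hc,
    integral_sum_smul_dirac _ (fun m => ENNReal.ofReal_ne_top) hc,
    ← Finset.sum_sub_distrib]
  refine Finset.sum_congr rfl fun m _ => ?_
  rw [toReal_ofReal_max, toReal_ofReal_max, ← sub_mul]
  rw [max_sub_max]

lemma sTVNorm_f (hx : Function.Injective x) (c : Fin M → ℝ) :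
    sTVNorm (∑ m, c m • (Measure.dirac (x m)).toSignedMeasure : SignedMeasure II)
      = ∑ m, |c m| := by
  classical
  set f : SignedMeasure II := ∑ m, c m • (Measure.dirac (x m)).toSignedMeasure with hfdef
  have hub : ∀ r ∈ {r : ℝ | ∃ P : Finset (Set II), (∀ B ∈ P, MeasurableSet B) ∧
      ((P : Set (Set II)).PairwiseDisjoint id) ∧ r = ∑ B ∈ P, |f B|},
      r ≤ ∑ m, |c m| := by
    rintro r ⟨P, hPm, hPd, rfl⟩
    have h1 : ∀ B ∈ P, |f B| ≤ ∑ m, if x m ∈ B then |c m| else 0 := by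
      intro B hB
      rw [hfdef, f_apply c (hPm B hB)]
      refine (Finset.abs_sum_le_sum_abs _ _).trans
        (le_of_eq (Finset.sum_congr rfl fun m _ => ?_))
      by_cases hmB : x m ∈ B <;> simp [hmB]
    refine (Finset.sum_le_sum h1).trans ?_
    rw [Finset.sum_comm]
    refine Finset.sum_le_sum fun m _ => ?_
    have hcard : (P.filter (fun B => x m ∈ B)).card ≤ 1 := by
      rw [Finset.card_le_one]
      intro B hB C hC
      simp only [Finset.mem_filter] at hB hC
      by_contra hne
      exact Set.disjoint_left.1 (hPd hB.1 hC.1 hne) hB.2 hC.2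
    calc ∑ B ∈ P, (if x m ∈ B then |c m| else 0)
        = (P.filter fun B => x m ∈ B).card * |c m| := by
          rw [← Finset.sum_filter, Finset.sum_const, nsmul_eq_mul]
      _ ≤ 1 * |c m| := by
          exact mul_le_mul_of_nonneg_right (by exact_mod_cast hcard) (abs_nonneg _)
      _ = |c m| := one_mul _
  have hmem : (∑ m, |c m|) ∈ {r : ℝ | ∃ P : Finset (Set II), (∀ B ∈ P, MeasurableSet B) ∧
      ((P : Set (Set II)).PairwiseDisjoint id) ∧ r = ∑ B ∈ P, |f B|} := by
    refine ⟨Finset.univ.image (fun m => ({x m} : Set II)), ?_, ?_, ?_⟩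
    · intro B hB
      obtain ⟨m, -, rfl⟩ := Finset.mem_image.1 hB
      exact measurableSet_singleton _
    · intro B hB C hC hne
      simp only [Finset.coe_image, Finset.coe_univ, Set.image_univ, Set.mem_range] at hB hC
      obtain ⟨m, rfl⟩ := hB
      obtain ⟨n, rfl⟩ := hC
      have : x m ≠ x n := fun h => hne (congrArg (fun y => ({y} : Set II)) h)
      simp only [Function.onFun, id]
      exact Set.disjoint_singleton.2 this
    · rw [Finset.sum_image (fun m _ n _ h => hx (Set.singleton_eq_singleton_iff.1 h))]
      refine Finset.sum_congr rfl fun m _ => ?_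
      have hfm : f {x m} = c m := by
        rw [hfdef, f_apply c (measurableSet_singleton _)]
        rw [Finset.sum_eq_single m (fun j _ hj => by
          rw [if_neg (fun h => hj (hx (Set.mem_singleton_iff.1 h)))]) (by simp)]
        rw [if_pos (Set.mem_singleton _)]
      rw [hfm]
  exact le_antisymm (csSup_le ⟨_, hmem⟩ hub) (le_csSup ⟨_, hub⟩ hmem)

end fpart

/-- real dual certificate. If for every choice of signs `sₘ ∈ {±1}`
there is a real polynomial `P` of degree `≤ N` with `P(xₘ) = sₘ` and `|P| < 1` on
`[−1,1] \ X`, then any real measure `f = ∑ₘ cₘ δ_{xₘ}` is the unique real Borel measure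
on `[−1,1]` of minimal TV norm matching the moments `∫ x^k dg`, `0 ≤ k ≤ N`. -/
theorem real_dual_certificate {M N : ℕ}
    (x : Fin M → (Set.Icc (-1 : ℝ) 1)) (hx : Function.Injective x)
    (hxint : ∀ m, (x m : ℝ) ∈ Set.Ioo (-1 : ℝ) 1)
    (hcert : ∀ s : Fin M → ℝ, (∀ m, s m = 1 ∨ s m = -1) →
      ∃ P : Polynomial ℝ, P.natDegree ≤ N ∧ (∀ m, P.eval (x m : ℝ) = s m) ∧
        ∀ y ∈ Set.Icc (-1 : ℝ) 1, y ∉ Set.range (fun m => (x m : ℝ)) → |P.eval y| < 1)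
    (c : Fin M → ℝ) (f : SignedMeasure (Set.Icc (-1 : ℝ) 1))
    (hf : f = ∑ m, c m • (Measure.dirac (x m)).toSignedMeasure) :
    ∀ g : SignedMeasure (Set.Icc (-1 : ℝ) 1),
      (∀ k ≤ N, sInt g (fun a => (a : ℝ) ^ k) = sInt f (fun a => (a : ℝ) ^ k)) →
      sTVNorm f ≤ sTVNorm g ∧ (sTVNorm g ≤ sTVNorm f → g = f) := by
  classical
  subst hf
  intro g hmom
  haveI : Nonempty II := ⟨⟨0, by norm_num⟩⟩
  set pos := g.toJordanDecomposition.posPart with hposdef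
  set neg := g.toJordanDecomposition.negPart with hnegdef
  -- sign vector and certificate polynomial
  set s : Fin M → ℝ := fun m => if c m < 0 then -1 else 1 with hs
  have hs1 : ∀ m, s m = 1 ∨ s m = -1 := fun m => by
    by_cases h : c m < 0 <;> simp [hs, h]
  obtain ⟨P₀, hdeg, hinterp, hlt⟩ := hcert s hs1
  have hPc : Continuous fun a : II => P₀.eval (a : ℝ) :=
    P₀.continuous.comp continuous_subtype_val
  -- moment matching extends to polynomials of degree ≤ N
  have hmono_g_f : ∀ Q : Polynomial ℝ, Q.natDegree ≤ N →
      sInt g (fun a => Q.eval (a : ℝ)) =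
        sInt (∑ m, c m • (Measure.dirac (x m)).toSignedMeasure) (fun a => Q.eval (a : ℝ)) := by
    intro Q hQ
    rw [sInt_eval g Q hQ, sInt_eval _ Q hQ]
    exact Finset.sum_congr rfl fun k hk => by
      rw [hmom k (Nat.lt_succ_iff.1 (Finset.mem_range.1 hk))]
  have hsf : sInt (∑ m, c m • (Measure.dirac (x m)).toSignedMeasure)
      (fun a => P₀.eval (a : ℝ)) = ∑ m, |c m| := by
    rw [sInt_f c hPc]
    refine Finset.sum_congr rfl fun m _ => ?_
    rw [hinterp m]
    by_cases h : c m < 0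
    · rw [hs]; simp only [h, if_pos]; rw [abs_of_neg h]; ring
    · rw [hs]; simp only [h, if_neg, not_false_iff]; rw [abs_of_nonneg (not_lt.1 h), mul_one]
  have hgP : sInt g (fun a => P₀.eval (a : ℝ)) = ∑ m, |c m| :=
    (hmono_g_f P₀ hdeg).trans hsf
  have habs : ∀ a : II, |P₀.eval (a : ℝ)| ≤ 1 := by
    intro a
    by_cases ha : (a : ℝ) ∈ Set.range (fun m => (x m : ℝ))
    · obtain ⟨m, hm⟩ := ha
      rw [← hm, hinterp m]
      rcases hs1 m with h | h <;> rw [h] <;> norm_num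
    · exact (hlt a a.2 ha).le
  have hTVf : sTVNorm (∑ m, c m • (Measure.dirac (x m)).toSignedMeasure : SignedMeasure II)
      = ∑ m, |c m| := sTVNorm_f hx c
  have hTVg : sTVNorm g = (pos Set.univ).toReal + (neg Set.univ).toReal := sTVNorm_eq g
  have hb : sInt g (fun a => P₀.eval (a : ℝ))
      ≤ (pos Set.univ).toReal + (neg Set.univ).toReal := by
    have h1 : ∫ a, P₀.eval (a : ℝ) ∂pos ≤ (pos Set.univ).toReal := by
      calc ∫ a, P₀.eval (a : ℝ) ∂pos ≤ ∫ _, (1 : ℝ) ∂pos :=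
            integral_mono (cont_integrable hPc pos) (integrable_const 1)
              (fun a => le_of_abs_le (habs a))
        _ = (pos Set.univ).toReal := by simp; rfl
    have h2 : -∫ a, P₀.eval (a : ℝ) ∂neg ≤ (neg Set.univ).toReal := by
      have : ∫ _, (-1 : ℝ) ∂neg ≤ ∫ a, P₀.eval (a : ℝ) ∂neg :=
        integral_mono (integrable_const (-1)) (cont_integrable hPc neg)
          (fun a => neg_le_of_abs_le (habs a))
      have h3 : ∫ _, (-1 : ℝ) ∂neg = -(neg Set.univ).toReal := by simp; rfl
      linarith
    unfold sInt
    rw [← hposdef, ← hnegdef]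
    linarith
  constructor
  · rw [hTVf, hTVg, ← hgP]; exact hb
  intro hle
  rw [hTVg, hTVf] at hle
  -- equality analysis
  have hint1 : Integrable (fun a : II => 1 - P₀.eval (a : ℝ)) pos :=
    (integrable_const 1).sub (cont_integrable hPc pos)
  have hint2 : Integrable (fun a : II => 1 + P₀.eval (a : ℝ)) neg :=
    (integrable_const 1).add (cont_integrable hPc neg)
  have e1 : ∫ a, (1 - P₀.eval (a : ℝ)) ∂pos
      = (pos Set.univ).toReal - ∫ a, P₀.eval (a : ℝ) ∂pos := by
    rw [integral_sub (integrable_const 1) (cont_integrable hPc pos)]; simp; rfl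
  have e2 : ∫ a, (1 + P₀.eval (a : ℝ)) ∂neg
      = (neg Set.univ).toReal + ∫ a, P₀.eval (a : ℝ) ∂neg := by
    rw [integral_add (integrable_const 1) (cont_integrable hPc neg)]; simp; rfl
  have nn1 : 0 ≤ fun a : II => 1 - P₀.eval (a : ℝ) := fun a => by
    have := (abs_le.1 (habs a)).2; simp; linarith
  have nn2 : 0 ≤ fun a : II => 1 + P₀.eval (a : ℝ) := fun a => by
    have := (abs_le.1 (habs a)).1; simp; linarith
  have hsum0 : ∫ a, (1 - P₀.eval (a : ℝ)) ∂pos + ∫ a, (1 + P₀.eval (a : ℝ)) ∂neg ≤ 0 := by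
    have hgPv : ∫ a, P₀.eval (a : ℝ) ∂pos - ∫ a, P₀.eval (a : ℝ) ∂neg = ∑ m, |c m| := by
      have := hgP; unfold sInt at this; rw [← hposdef, ← hnegdef] at this; exact this
    rw [e1, e2]; linarith
  have int1nn : 0 ≤ ∫ a, (1 - P₀.eval (a : ℝ)) ∂pos := integral_nonneg nn1
  have int2nn : 0 ≤ ∫ a, (1 + P₀.eval (a : ℝ)) ∂neg := integral_nonneg nn2
  have z1 : ∫ a, (1 - P₀.eval (a : ℝ)) ∂pos = 0 := le_antisymm (by linarith) int1nn
  have z2 : ∫ a, (1 + P₀.eval (a : ℝ)) ∂neg = 0 := le_antisymm (by linarith) int2nn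
  have ae1 := (integral_eq_zero_iff_of_nonneg nn1 hint1).1 z1
  have ae2 := (integral_eq_zero_iff_of_nonneg nn2 hint2).1 z2
  rw [Filter.EventuallyEq, ae_iff] at ae1 ae2
  -- support of g is contained in the set of nodes
  have hcompl : ∀ a : II, a ∉ Set.range x → (a : ℝ) ∉ Set.range (fun m => (x m : ℝ)) := by
    intro a ha
    rintro ⟨m, hm⟩
    exact ha ⟨m, Subtype.ext hm⟩
  have hposnull : pos (Set.range x)ᶜ = 0 := by
    refine measure_mono_null (fun a ha => ?_) ae1
    have hlt1 := hlt a a.2 (hcompl a ha)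
    simp only [Set.mem_setOf_eq, Pi.zero_apply]
    intro h0
    have : P₀.eval (a : ℝ) = 1 := by linarith [sub_eq_zero.1 h0]
    rw [this] at hlt1; norm_num at hlt1
  have hnegnull : neg (Set.range x)ᶜ = 0 := by
    refine measure_mono_null (fun a ha => ?_) ae2
    have hlt1 := hlt a a.2 (hcompl a ha)
    simp only [Set.mem_setOf_eq, Pi.zero_apply]
    intro h0
    have : P₀.eval (a : ℝ) = -1 := by linarith
    rw [this] at hlt1; norm_num at hlt1
  -- the weights of g at the nodes
  set d : Fin M → ℝ := fun m => (pos {x m}).toReal - (neg {x m}).toReal with hd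
  have dint : ∀ {h : II → ℝ}, Continuous h → sInt g h = ∑ m, d m * h (x m) := by
    intro h hc
    unfold sInt
    rw [← hposdef, ← hnegdef, integral_supported hx pos hposnull hc,
      integral_supported hx neg hnegnull hc, ← Finset.sum_sub_distrib]
    exact Finset.sum_congr rfl fun m _ => (sub_mul _ _ _).symm
  have hQ : ∀ m₀ : Fin M, ∃ Q : Polynomial ℝ, Q.natDegree ≤ N ∧
      ∀ j, Q.eval ((x j : ℝ)) = if j = m₀ then 1 else 0 := by
    intro m₀
    obtain ⟨Pp, hPp, hPpi, -⟩ := hcert (fun _ => 1) (fun _ => Or.inl rfl)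
    obtain ⟨Pm, hPm, hPmi, -⟩ := hcert (fun j => if j = m₀ then -1 else 1)
      (fun j => by by_cases h : j = m₀ <;> simp [h])
    refine ⟨Polynomial.C (1 / 2) * (Pp - Pm), ?_, ?_⟩
    · refine (Polynomial.natDegree_C_mul_le _ _).trans ?_
      exact (Polynomial.natDegree_sub_le _ _).trans (max_le hPp hPm)
    · intro j
      rw [Polynomial.eval_mul, Polynomial.eval_C, Polynomial.eval_sub, hPpi j, hPmi j]
      by_cases h : j = m₀ <;> simp [h] <;> norm_num
  have hdm : ∀ m, d m = c m := by
    intro m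
    obtain ⟨Q, hQd, hQe⟩ := hQ m
    have hQc : Continuous fun a : II => Q.eval (a : ℝ) :=
      Q.continuous.comp continuous_subtype_val
    have h1 := hmono_g_f Q hQd
    rw [dint hQc, sInt_f c hQc] at h1
    have lhs : ∑ j, d j * Q.eval ((x j : ℝ)) = d m := by
      rw [Finset.sum_eq_single m (fun j _ hj => by rw [hQe j, if_neg hj, mul_zero])
        (by simp)]
      rw [hQe m, if_pos rfl, mul_one]
    have rhs : ∑ j, c j * Q.eval ((x j : ℝ)) = c m := by
      rw [Finset.sum_eq_single m (fun j _ hj => by rw [hQe j, if_neg hj, mul_zero])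
        (by simp)]
      rw [hQe m, if_pos rfl, mul_one]
    rw [lhs, rhs] at h1
    exact h1
  -- conclude g = f
  refine VectorMeasure.ext fun B hB => ?_
  rw [sm_apply g hB, f_apply c hB, ← hposdef, ← hnegdef,
    measure_supported hx pos hposnull hB, measure_supported hx neg hnegnull hB,
    ENNReal.toReal_sum (fun m _ => by split_ifs <;> simp [measure_ne_top]),
    ENNReal.toReal_sum (fun m _ => by split_ifs <;> simp [measure_ne_top]),
    ← Finset.sum_sub_distrib]
  refine Finset.sum_congr rfl fun m _ => ?_
  by_cases hmB : x m ∈ B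
  · simp only [if_pos hmB]
    exact hdm m
  · simp [hmB]
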